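/- In a contraction hierarchy H viewed as a chordal graph with perfect elimination ordering given by rank, the elimination tree ancestors of a vertex v are exactly N_H^↑(v) closed under the ancestor relation: formally, w is an ancestor of v in the elimination tree if and only if rank(w) > rank(v) and there is a path from v to w in H using only vertices of rank at most rank(w) — equivalently, v and w lie in a common connected component of the subgraph of H induced by vertices of rank ≤ rank(w). -/
import Mathlib

open SimpleGraph

private lemma stmt16_key {V : Type*} (H : SimpleGraph V) (rank : V → ℕ)
    (hrank : Function.Injective rank)
    (hPEO : ∀ v a b : V, H.Adj v a → H.Adj v b → rank v < rank a → rank v < rank b →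
      a ≠ b → H.Adj a b)
    (root : V) (hroot : ∀ v, v ≠ root → rank v < rank root)
    (par : V → V)
    (hpar : ∀ v, v ≠ root → H.Adj v (par v) ∧ rank v < rank (par v) ∧
      ∀ w, H.Adj v w → rank v < rank w → rank (par v) ≤ rank w)
    (w : V) :
    ∀ k n (v : V) (p : H.Walk v w), rank w - rank v = k → p.length = n →
      rank v < rank w → (∀ x ∈ p.support, rank x ≤ rank w) →
      Relation.TransGen (fun a b => a ≠ root ∧ b = par a) v w := by
  classical
  intro k
  induction k using Nat.strong_induction_on with
  | _ k ihk =>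
  intro n
  induction n using Nat.strong_induction_on with
  | _ n ihn =>
  intro v p hk hn hvw hsupp
  have hvne : v ≠ w := fun h => by subst h; exact lt_irrefl _ hvw
  have hvroot : v ≠ root := by
    intro h
    rcases eq_or_ne w root with rfl | hwr
    · rw [h] at hvw; exact lt_irrefl _ hvw
    · have := hroot w hwr; rw [h] at hvw; omega
  obtain ⟨u, adj, q, hq⟩ := Walk.not_nil_iff.mp (Walk.not_nil_of_ne hvne (p := p))
  subst hq
  have hu_mem : u ∈ (Walk.cons adj q).support := by
    rw [Walk.support_cons]; exact List.mem_cons_of_mem _ q.start_mem_support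
  have huw : rank u ≤ rank w := hsupp u hu_mem
  by_cases hcase : rank v < rank u
  · -- second vertex has higher rank: move to par v
    obtain ⟨hadjp, hvp, hminp⟩ := hpar v hvroot
    have hple : rank (par v) ≤ rank u := hminp u adj hcase
    by_cases hw : par v = w
    · exact Relation.TransGen.single ⟨hvroot, hw.symm⟩
    · have hpw : rank (par v) < rank w :=
        lt_of_le_of_ne (hple.trans huw) fun h => hw (hrank h)
      have hr : ∃ r : H.Walk (par v) w, ∀ x ∈ r.support, rank x ≤ rank w := by
        by_cases hpu : par v = u
        · refine ⟨q.copy hpu.symm rfl, ?_⟩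
          intro x hx
          rw [Walk.support_copy] at hx
          exact hsupp x (by rw [Walk.support_cons]; exact List.mem_cons_of_mem _ hx)
        · have hadj2 : H.Adj (par v) u := hPEO v (par v) u hadjp adj hvp hcase hpu
          refine ⟨Walk.cons hadj2 q, ?_⟩
          intro x hx
          rw [Walk.support_cons, List.mem_cons] at hx
          rcases hx with rfl | hx
          · exact hple.trans huw
          · exact hsupp x (by rw [Walk.support_cons]; exact List.mem_cons_of_mem _ hx)
      obtain ⟨r, hr⟩ := hr
      exact Relation.TransGen.head ⟨hvroot, rfl⟩
        (ihk (rank w - rank (par v)) (by omega) r.length (par v) r rfl rfl hpw hr)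
  · -- second vertex has lower rank: shortcut the global minimum vertex
    have huv : rank u < rank v :=
      lt_of_le_of_ne (not_lt.mp hcase) fun h => (H.ne_of_adj adj) (hrank h.symm)
    set P : H.Walk v w := Walk.cons adj q with hP
    obtain ⟨m, hm_mem', hm_min'⟩ :=
      Finset.exists_min_image P.support.toFinset rank ⟨v, by simp [hP]⟩
    have hm_mem : m ∈ P.support := List.mem_toFinset.mp hm_mem'
    have hm_min : ∀ x ∈ P.support, rank m ≤ rank x := fun x hx =>
      hm_min' x (List.mem_toFinset.mpr hx)
    have hmu : rank m ≤ rank u := hm_min u hu_mem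
    have hmv : m ≠ v := fun h => by subst h; omega
    have hmw : m ≠ w := fun h => by subst h; omega
    set t := P.takeUntil m hm_mem with ht
    set d := P.dropUntil m hm_mem with hd
    have hlen : t.length + d.length = P.length := by
      have := congrArg Walk.length (P.take_spec hm_mem)
      rwa [Walk.length_append] at this
    obtain ⟨y, h1, tr, htr⟩ :=
      Walk.not_nil_iff.mp (Walk.not_nil_of_ne (fun h : m = v => hmv h) (p := t.reverse))
    obtain ⟨z, h2, d', hd'⟩ :=
      Walk.not_nil_iff.mp (Walk.not_nil_of_ne hmw (p := d))
    have hty : t.length = tr.length + 1 := by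
      have := congrArg Walk.length htr
      rwa [Walk.length_reverse, Walk.length_cons] at this
    have hdz : d.length = d'.length + 1 := by
      rw [hd', Walk.length_cons]
    have hy_mem : y ∈ P.support := by
      apply P.support_takeUntil_subset hm_mem
      have : y ∈ t.reverse.support := by
        rw [htr, Walk.support_cons]; exact List.mem_cons_of_mem _ tr.start_mem_support
      rwa [Walk.support_reverse, List.mem_reverse] at this
    have hz_mem : z ∈ P.support := by
      apply P.support_dropUntil_subset hm_mem
      rw [← hd, hd', Walk.support_cons]; exact List.mem_cons_of_mem _ d'.start_mem_support
    have hmy : rank m < rank y :=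
      lt_of_le_of_ne (hm_min y hy_mem) fun h => (H.ne_of_adj h1) (hrank h)
    have hmz : rank m < rank z :=
      lt_of_le_of_ne (hm_min z hz_mem) fun h => (H.ne_of_adj h2) (hrank h)
    have htr_sub : ∀ x ∈ tr.support, x ∈ P.support := by
      intro x hx
      apply P.support_takeUntil_subset hm_mem
      have : x ∈ t.reverse.support := by
        rw [htr, Walk.support_cons]; exact List.mem_cons_of_mem _ hx
      rwa [Walk.support_reverse, List.mem_reverse] at this
    have hd'_sub : ∀ x ∈ d'.support, x ∈ P.support := by
      intro x hx
      apply P.support_dropUntil_subset hm_mem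
      rw [← hd, hd', Walk.support_cons]; exact List.mem_cons_of_mem _ hx
    by_cases hyz : y = z
    · have p2 : H.Walk v w := tr.reverse.append (d'.copy hyz.symm rfl)
      refine ihn (tr.reverse.append (d'.copy hyz.symm rfl)).length ?_ v _ hk rfl hvw ?_
      · rw [Walk.length_append, Walk.length_reverse, Walk.length_copy]
        omega
      · intro x hx
        rw [Walk.mem_support_append_iff] at hx
        rcases hx with hx | hx
        · rw [Walk.support_reverse, List.mem_reverse] at hx
          exact hsupp x (htr_sub x hx)
        · rw [Walk.support_copy] at hx
          exact hsupp x (hd'_sub x hx)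
    · have hadjyz : H.Adj y z := hPEO m y z h1 h2 hmy hmz hyz
      refine ihn (tr.reverse.append (Walk.cons hadjyz d')).length ?_ v _ hk rfl hvw ?_
      · rw [Walk.length_append, Walk.length_reverse, Walk.length_cons]
        omega
      · intro x hx
        rw [Walk.mem_support_append_iff] at hx
        rcases hx with hx | hx
        · rw [Walk.support_reverse, List.mem_reverse] at hx
          exact hsupp x (htr_sub x hx)
        · rw [Walk.support_cons, List.mem_cons] at hx
          rcases hx with rfl | hx
          · exact hsupp x (hy_mem)
          · exact hsupp x (hd'_sub x hx)

/-- In a contraction hierarchy `H` viewed as a chordal graph whose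
rank order is a perfect elimination ordering, `w` is a (proper) ancestor of `v` in
the elimination tree if and only if `rank w > rank v` and there is a path from `v`
to `w` in `H` using only vertices of rank at most `rank w` (equivalently, `v` and
`w` lie in a common connected component of the subgraph of `H` induced by vertices
of rank `≤ rank w`). -/
theorem stmt16 {V : Type*} (H : SimpleGraph V) (rank : V → ℕ)
    (hrank : Function.Injective rank)
    (hconn : H.Connected)
    -- the rank order is a perfect elimination ordering of `H`
    (hPEO : ∀ v a b : V, H.Adj v a → H.Adj v b → rank v < rank a → rank v < rank b →
      a ≠ b → H.Adj a b)
    (root : V) (hroot : ∀ v, v ≠ root → rank v < rank root)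
    (par : V → V)
    -- `par v` is the lowest-ranked higher `H`-neighbor of `v` (for `v ≠ root`)
    (hpar : ∀ v, v ≠ root → H.Adj v (par v) ∧ rank v < rank (par v) ∧
      ∀ w, H.Adj v w → rank v < rank w → rank (par v) ≤ rank w)
    (v w : V) :
    Relation.TransGen (fun a b => a ≠ root ∧ b = par a) v w ↔
      rank v < rank w ∧ ∃ p : H.Walk v w, ∀ x ∈ p.support, rank x ≤ rank w := by
  constructor
  · intro h
    induction h with
    | single h =>
      obtain ⟨hvr, hw⟩ := h
      obtain ⟨hadj, hlt, -⟩ := hpar v hvr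
      subst hw
      refine ⟨hlt, Walk.cons hadj Walk.nil, ?_⟩
      intro x hx
      rw [Walk.support_cons, List.mem_cons] at hx
      rcases hx with rfl | hx
      · exact hlt.le
      · rw [Walk.support_nil, List.mem_singleton] at hx
        subst hx; exact le_refl _
    | tail hab h ih =>
      rename_i b c
      obtain ⟨hbr, hc⟩ := h
      obtain ⟨hadj, hlt, -⟩ := hpar b hbr
      subst hc
      obtain ⟨hvb, p, hp⟩ := ih
      refine ⟨hvb.trans hlt, p.append (Walk.cons hadj Walk.nil), ?_⟩
      intro x hx
      rw [Walk.mem_support_append_iff] at hx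
      rcases hx with hx | hx
      · exact (hp x hx).trans hlt.le
      · rw [Walk.support_cons, List.mem_cons] at hx
        rcases hx with rfl | hx
        · exact hlt.le
        · rw [Walk.support_nil, List.mem_singleton] at hx
          subst hx; exact le_refl _
  · rintro ⟨hlt, p, hp⟩
    exact stmt16_key H rank hrank hPEO root hroot par hpar w
      (rank w - rank v) p.length v p rfl rfl hlt hp
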